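/- For each real α > 0, there exists a unique real s ∈ (0, 1) such that ∑_{n≥1} (p−1) p^{−(n+α)s} = 1; equivalently, p^{αs}(p^s − 1) = p − 1. Moreover, viewed as a function s(α), it is continuous and strictly decreasing on (0, ∞), with s(α) → 1 as α → 0⁺ and s(α) → 0 as α → ∞. -/

import Mathlib

open Set Filter Real

namespace Stmt12Aux

noncomputable def g (q α s : ℝ) : ℝ := q ^ (α * s) * (q ^ s - 1)

lemma continuous_qpow {q : ℝ} (hq : 0 < q) : Continuous (fun x : ℝ => q ^ x) := by
  have : (fun x : ℝ => q ^ x) = fun x => Real.exp (Real.log q * x) := by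
    funext x; exact Real.rpow_def_of_pos hq x
  rw [this]
  exact Real.continuous_exp.comp (continuous_const.mul continuous_id)

lemma g_strictMonoOn {q : ℝ} (hq : 1 < q) {α : ℝ} (hα : 0 < α) :
    StrictMonoOn (g q α) (Ici 0) := by
  have hq0 : (0:ℝ) < q := lt_trans one_pos hq
  intro a ha b hb hab
  have h1 : q ^ (α * a) ≤ q ^ (α * b) :=
    Real.rpow_le_rpow_of_exponent_le hq.le (by nlinarith [mem_Ici.mp ha])
  have h2 : q ^ a < q ^ b := Real.rpow_lt_rpow_of_exponent_lt hq hab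
  have h3 : (1:ℝ) ≤ q ^ a := by
    simpa using Real.rpow_le_rpow_of_exponent_le hq.le (mem_Ici.mp ha)
  have h4 : 0 < q ^ (α * b) := Real.rpow_pos_of_pos hq0 _
  simp only [g]
  nlinarith [mul_le_mul_of_nonneg_right h1 (by linarith : (0:ℝ) ≤ q ^ a - 1),
    mul_lt_mul_of_pos_left h2 h4]

lemma g_continuous {q : ℝ} (hq : 0 < q) (α : ℝ) : Continuous (g q α) := by
  unfold g
  exact ((continuous_qpow hq).comp (continuous_const.mul continuous_id)).mul
    ((continuous_qpow hq).sub continuous_const)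

lemma exists_root {q : ℝ} (hq : 1 < q) {α : ℝ} (hα : 0 < α) :
    ∃ s ∈ Ioo (0:ℝ) 1, g q α s = q - 1 := by
  have hq0 : (0:ℝ) < q := lt_trans one_pos hq
  have h0 : g q α 0 = 0 := by simp [g]
  have h1 : q - 1 < g q α 1 := by
    have : 1 < q ^ α := by
      rw [Real.one_lt_rpow_iff_of_pos hq0]; exact Or.inl ⟨hq, hα⟩
    simp only [g, mul_one, Real.rpow_one]
    nlinarith
  have hsub : Ioo (g q α 0) (g q α 1) ⊆ g q α '' Ioo 0 1 :=
    intermediate_value_Ioo (by norm_num) ((g_continuous hq0 α).continuousOn)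
  have hmem : (q - 1) ∈ Ioo (g q α 0) (g q α 1) := by
    rw [h0]; exact ⟨by linarith, h1⟩
  obtain ⟨s, hs, hgs⟩ := hsub hmem
  exact ⟨s, hs, hgs⟩

lemma g_mono_alpha {q : ℝ} (hq : 1 < q) {α β s : ℝ} (hαβ : α < β) (hs : 0 < s) :
    g q α s < g q β s := by
  have hq0 : (0:ℝ) < q := lt_trans one_pos hq
  have h1 : q ^ (α * s) < q ^ (β * s) :=
    Real.rpow_lt_rpow_of_exponent_lt hq (by nlinarith)
  have h2 : 1 < q ^ s := by
    rw [Real.one_lt_rpow_iff_of_pos hq0]; exact Or.inl ⟨hq, hs⟩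
  have h3 : 0 < q ^ (α * s) := Real.rpow_pos_of_pos hq0 _
  simp only [g]
  nlinarith

lemma exists_alpha {q : ℝ} (hq : 1 < q) {t : ℝ} (ht : t ∈ Ioo (0:ℝ) 1) :
    ∃ α : ℝ, 0 < α ∧ g q α t = q - 1 := by
  have hq0 : (0:ℝ) < q := lt_trans one_pos hq
  obtain ⟨ht0, ht1⟩ := ht
  have hB1 : 1 < q ^ t := by
    rw [Real.one_lt_rpow_iff_of_pos hq0]; exact Or.inl ⟨hq, ht0⟩
  have hBq : q ^ t < q := by
    nth_rewrite 2 [← Real.rpow_one q]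
    exact Real.rpow_lt_rpow_of_exponent_lt hq ht1
  have hR1 : 1 < (q - 1) / (q ^ t - 1) :=
    (one_lt_div (by linarith)).2 (by linarith)
  have hlogq : 0 < Real.log q := Real.log_pos hq
  refine ⟨Real.log ((q - 1) / (q ^ t - 1)) / (t * Real.log q), ?_, ?_⟩
  · exact div_pos (Real.log_pos hR1) (by positivity)
  · have hexp : Real.log ((q - 1) / (q ^ t - 1)) / (t * Real.log q) * t
        = Real.log ((q - 1) / (q ^ t - 1)) / Real.log q := by
      field_simp
    simp only [g, hexp]
    rw [Real.rpow_def_of_pos hq0, mul_comm (Real.log q), div_mul_cancel₀ _ hlogq.ne',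
      Real.exp_log (by positivity)]
    field_simp
    exact mul_div_cancel_right₀ _ (by linarith)

lemma tsum_formula {q : ℝ} (hq : 1 < q) (α : ℝ) {s : ℝ} (hs : 0 < s) :
    (∑' n : ℕ, (q - 1) * q ^ (-(((n : ℝ) + 1) + α) * s)) = (q - 1) / (g q α s) := by
  have hq0 : (0:ℝ) < q := lt_trans one_pos hq
  have hr0 : (0:ℝ) < q ^ (-s) := Real.rpow_pos_of_pos hq0 _
  have hr1 : q ^ (-s) < 1 := Real.rpow_lt_one_of_one_lt_of_neg hq (by linarith)
  have key : ∀ n : ℕ, (q - 1) * q ^ (-(((n : ℝ) + 1) + α) * s)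
      = ((q - 1) * q ^ (-(1 + α) * s)) * (q ^ (-s)) ^ n := by
    intro n
    rw [mul_assoc]
    congr 1
    rw [← Real.rpow_natCast (q ^ (-s)) n, ← Real.rpow_mul hq0.le, ← Real.rpow_add hq0]
    congr 1
    ring
  rw [tsum_congr key, tsum_mul_left, tsum_geometric_of_lt_one hr0.le hr1]
  have hB1 : 1 < q ^ s := by
    rw [Real.one_lt_rpow_iff_of_pos hq0]; exact Or.inl ⟨hq, hs⟩
  have hA : 0 < q ^ (α * s) := Real.rpow_pos_of_pos hq0 _
  have e1 : q ^ (-(1 + α) * s) = (q ^ (α * s) * q ^ s)⁻¹ := by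
    rw [show -(1 + α) * s = -(α * s + s) by ring, Real.rpow_neg hq0.le, Real.rpow_add hq0]
  have e2 : q ^ (-s) = (q ^ s)⁻¹ := Real.rpow_neg hq0.le s
  rw [e1, e2]
  unfold g
  have hB0 : (0:ℝ) < q ^ s := Real.rpow_pos_of_pos hq0 _
  have hBne : q ^ s - 1 ≠ 0 := by linarith
  field_simp

end Stmt12Aux

open Set Filter Real Topology Stmt12Aux in
/-- For each `α > 0` there is a unique `s = s(α) ∈ (0,1)` with
`∑_{n ≥ 1} (p-1) p^{-(n+α)s} = 1`, equivalently `p^{αs}(p^s - 1) = p - 1`; moreover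
`α ↦ s(α)` is continuous and strictly decreasing on `(0, ∞)`, tends to `1` as `α → 0⁺`
and to `0` as `α → ∞`. -/
theorem stmt_12 (p : ℕ) (hp : p.Prime) :
    ∃ S : ℝ → ℝ,
      (∀ α : ℝ, 0 < α →
        S α ∈ Set.Ioo (0 : ℝ) 1 ∧
        (∑' n : ℕ, ((p : ℝ) - 1) * (p : ℝ) ^ (-(((n : ℝ) + 1) + α) * S α)) = 1 ∧
        (p : ℝ) ^ (α * S α) * ((p : ℝ) ^ (S α) - 1) = (p : ℝ) - 1 ∧
        (∀ s : ℝ, s ∈ Set.Ioo (0 : ℝ) 1 →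
          (∑' n : ℕ, ((p : ℝ) - 1) * (p : ℝ) ^ (-(((n : ℝ) + 1) + α) * s)) = 1 → s = S α)) ∧
      ContinuousOn S (Set.Ioi 0) ∧
      StrictAntiOn S (Set.Ioi 0) ∧
      Filter.Tendsto S (nhdsWithin 0 (Set.Ioi 0)) (nhds 1) ∧
      Filter.Tendsto S Filter.atTop (nhds 0) := by
  set q : ℝ := (p : ℝ) with hqdef
  have hq : (1:ℝ) < q := by rw [hqdef]; exact_mod_cast hp.one_lt
  have hq0 : (0:ℝ) < q := lt_trans one_pos hq
  classical
  set S : ℝ → ℝ := fun α => if h : 0 < α then (exists_root hq h).choose else 1 with hSdef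
  have hSmem : ∀ {α : ℝ}, 0 < α → S α ∈ Ioo (0:ℝ) 1 := by
    intro α hα
    simp only [hSdef, dif_pos hα]
    exact (exists_root hq hα).choose_spec.1
  have hSroot : ∀ {α : ℝ}, (hα : 0 < α) → g q α (S α) = q - 1 := by
    intro α hα
    simp only [hSdef, dif_pos hα]
    exact (exists_root hq hα).choose_spec.2
  have huniq : ∀ {α s : ℝ}, 0 < α → s ∈ Ioo (0:ℝ) 1 → g q α s = q - 1 → s = S α := by
    intro α s hα hs hgs
    have := hSmem hα
    exact (g_strictMonoOn hq hα).injOn (le_of_lt hs.1) (le_of_lt this.1)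
      (by rw [hgs, hSroot hα])
  have hanti : StrictAntiOn S (Ioi 0) := by
    intro a ha b hb hab
    have ha' : (0:ℝ) < a := ha
    have hb' : (0:ℝ) < b := hb
    have hlt : g q b (S b) < g q b (S a) := by
      rw [hSroot hb', ← hSroot ha']
      exact g_mono_alpha hq hab (hSmem ha').1
    exact ((g_strictMonoOn hq hb').lt_iff_lt (le_of_lt (hSmem hb').1)
      (le_of_lt (hSmem ha').1)).mp hlt
  have hsurj : ∀ t ∈ Ioo (0:ℝ) 1, ∃ α, 0 < α ∧ S α = t := by
    intro t ht
    obtain ⟨α, hα, hgα⟩ := exists_alpha hq ht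
    exact ⟨α, hα, (huniq hα ht hgα).symm⟩
  refine ⟨S, ?_, ?_, hanti, ?_, ?_⟩
  · -- pointwise properties
    intro α hα
    have hmem := hSmem hα
    have hroot := hSroot hα
    have hne : g q α (S α) ≠ 0 := by rw [hroot]; linarith
    refine ⟨hmem, ?_, hroot, ?_⟩
    · rw [tsum_formula hq α hmem.1, hroot, div_self (by linarith)]
    · intro s hs hsum
      rw [tsum_formula hq α hs.1] at hsum
      have hgne : g q α s ≠ 0 := by
        intro h; rw [h, div_zero] at hsum; exact one_ne_zero hsum.symm
      have : g q α s = q - 1 := by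
        field_simp at hsum; linarith
      exact huniq hα hs this
  · -- continuity
    intro α hα
    have hα' : (0:ℝ) < α := hα
    have hmono : StrictMonoOn (fun a => -S a) (Ioi 0) := fun a ha b hb hab => by
      simpa using neg_lt_neg (hanti ha hb hab)
    have himg : (fun a => -S a) '' (Ioi 0) ∈ 𝓝 (-S α) := by
      have hsub : Ioo (-1 : ℝ) 0 ⊆ (fun a => -S a) '' (Ioi 0) := by
        intro y hy
        obtain ⟨β, hβ, hβt⟩ := hsurj (-y) ⟨by linarith [hy.2], by linarith [hy.1]⟩
        exact ⟨β, hβ, by simp only []; rw [hβt]; ring⟩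
      refine mem_of_superset (isOpen_Ioo.mem_nhds ?_) hsub
      have := hSmem hα'
      exact ⟨by linarith [this.2], by linarith [this.1]⟩
    have hcn : ContinuousAt (fun a => -S a) α :=
      hmono.continuousAt_of_image_mem_nhds (Ioi_mem_nhds hα') himg
    have : ContinuousAt S α := by
      have := hcn.neg
      convert this using 1; funext a; simp
    exact this.continuousWithinAt
  · -- limit at 0⁺
    rw [tendsto_order]
    constructor
    · intro t ht
      rcases le_or_gt t 0 with h | h
      · filter_upwards [self_mem_nhdsWithin] with α hα
        exact lt_of_le_of_lt h (hSmem hα).1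
      · obtain ⟨β, hβ, hβt⟩ := hsurj t ⟨h, ht⟩
        filter_upwards [Ioo_mem_nhdsGT_of_mem (by constructor <;> [exact le_refl (0:ℝ); exact hβ])]
          with α hα
        rw [← hβt]
        exact hanti hα.1 hβ hα.2
    · intro t ht
      filter_upwards [self_mem_nhdsWithin] with α hα
      exact lt_trans (hSmem hα).2 ht
  · -- limit at ∞
    rw [tendsto_order]
    constructor
    · intro t ht
      filter_upwards [eventually_gt_atTop 0] with α hα
      exact lt_trans ht (hSmem hα).1
    · intro t ht
      rcases lt_or_ge t 1 with h | h
      · obtain ⟨β, hβ, hβt⟩ := hsurj t ⟨ht, h⟩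
        filter_upwards [eventually_gt_atTop β] with α hα
        rw [← hβt]
        exact hanti hβ (lt_trans hβ hα) hα
      · filter_upwards [eventually_gt_atTop 0] with α hα
        exact lt_of_lt_of_le (hSmem hα).2 h
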